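/- For a Manin matrix M of size n×n, the column determinant det M = Σ_{σ∈S_n} sgn(σ) M_{σ(1),1} M_{σ(2),2} ⋯ M_{σ(n),n} equals tr(A_n · M⁽¹⁾M⁽²⁾⋯M⁽ⁿ⁾), where A_n is the full antisymmetrizer on (ℂⁿ)^{⊗n} and the trace is over all n tensor factors. -/

import Mathlib

open Matrix

/-- `M` is a Manin matrix. -/
def IsManin {R : Type*} [Ring R] {n : ℕ} (M : Matrix (Fin n) (Fin n) R) : Prop :=
  (∀ i k j l : Fin n, i < k → j < l →
    M i j * M k l - M k l * M i j = M k j * M i l - M i l * M k j) ∧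
  (∀ i k j : Fin n, M i j * M k j = M k j * M i j)

/-- `M` acting in the `k`-th tensor leg of (ℂⁿ)^{⊗m} (identity elsewhere). -/
def leg {R : Type*} [Ring R] {n m : ℕ} (M : Matrix (Fin n) (Fin n) R) (k : Fin m) :
    Matrix (Fin m → Fin n) (Fin m → Fin n) R :=
  fun f g => if ∀ l, l ≠ k → f l = g l then M (f k) (g k) else 0

/-- Standard permutation representation of S_m on (ℂⁿ)^{⊗m}:
π(σ)(v₁⊗⋯⊗v_m) = v_{σ⁻¹(1)}⊗⋯⊗v_{σ⁻¹(m)}. -/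
def permMat (R : Type*) [Ring R] (n : ℕ) {m : ℕ} (σ : Equiv.Perm (Fin m)) :
    Matrix (Fin m → Fin n) (Fin m → Fin n) R :=
  fun f g => if f = g ∘ ⇑σ⁻¹ then 1 else 0

/-- The antisymmetrizer A_m = (1/m!) Σ_{σ ∈ S_m} sgn(σ) π(σ) on (ℂⁿ)^{⊗m}. -/
noncomputable def antisym (R : Type*) [Ring R] [Algebra ℚ R] (n m : ℕ) :
    Matrix (Fin m → Fin n) (Fin m → Fin n) R :=
  ((m.factorial : ℚ)⁻¹) •
    ∑ σ : Equiv.Perm (Fin m), ((Equiv.Perm.sign σ : ℤ) : ℚ) • permMat R n σ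

/-- The ordered product M⁽¹⁾·M⁽²⁾⋯M⁽ᵐ⁾ on (ℂⁿ)^{⊗m}. -/
def legProd {R : Type*} [Ring R] {n : ℕ} (M : Matrix (Fin n) (Fin n) R) (m : ℕ) :
    Matrix (Fin m → Fin n) (Fin m → Fin n) R :=
  (List.ofFn fun k : Fin m => leg M k).prod

/-- The column determinant Σ_σ sgn(σ) M_{σ(1),1}⋯M_{σ(n),n}. -/
def cdet {R : Type*} [Ring R] {n : ℕ} (M : Matrix (Fin n) (Fin n) R) : R :=
  ∑ σ : Equiv.Perm (Fin n),
    (Equiv.Perm.sign σ : ℤ) • (List.ofFn fun j => M (σ j) j).prod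


section Aux

variable {R : Type*} [Ring R]

lemma take_ofFn_congr {α : Type*} {m j : ℕ} {F G : Fin m → α}
    (h : ∀ k : Fin m, (k : ℕ) < j → F k = G k) :
    (List.ofFn F).take j = (List.ofFn G).take j := by
  apply List.ext_getElem
  · simp
  · intro i h1 h2
    simp only [List.length_take, List.length_ofFn, lt_min_iff] at h1
    simp [List.getElem_take, List.getElem_ofFn, h ⟨i, h1.2⟩ h1.1]

lemma drop_ofFn_congr {α : Type*} {m j : ℕ} {F G : Fin m → α}
    (h : ∀ k : Fin m, j ≤ (k : ℕ) → F k = G k) :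
    (List.ofFn F).drop j = (List.ofFn G).drop j := by
  apply List.ext_getElem
  · simp
  · intro i h1 h2
    simp only [List.length_drop, List.length_ofFn] at h1
    rw [List.getElem_drop, List.getElem_drop, List.getElem_ofFn, List.getElem_ofFn]
    exact h _ (Nat.le_add_right _ _)

lemma prod_split {m : ℕ} (L : Fin (m + 1) → R) (i : Fin m) :
    (List.ofFn L).prod =
      ((List.ofFn L).take (i : ℕ)).prod * (L i.castSucc * L i.succ) *
        ((List.ofFn L).drop ((i : ℕ) + 2)).prod := by
  rw [← List.prod_take_mul_prod_drop (List.ofFn L) ((i : ℕ) + 2)]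
  congr 1
  have h1 : (i : ℕ) + 1 < (List.ofFn L).length := by simp [Nat.succ_lt_succ i.isLt]
  have h0 : (i : ℕ) < (List.ofFn L).length := by simp [lt_of_lt_of_le i.isLt (Nat.le_succ m)]
  rw [show (i : ℕ) + 2 = ((i : ℕ) + 1) + 1 from rfl,
    List.prod_take_succ _ _ h1, List.prod_take_succ _ _ h0, mul_assoc]
  congr 1
  congr 1
  · rw [List.getElem_ofFn]; congr 1
  · rw [List.getElem_ofFn]; congr 1

lemma manin_rel {n : ℕ} {M : Matrix (Fin n) (Fin n) R}
    (hM : IsManin M) (a b j l : Fin n) :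
    M a j * M b l + M a l * M b j = M b j * M a l + M b l * M a j := by
  have key : ∀ a b : Fin n, ∀ j l : Fin n, j < l →
      M a j * M b l + M a l * M b j = M b j * M a l + M b l * M a j := by
    intro a b j l h
    rcases lt_trichotomy a b with hab | rfl | hab
    · exact sub_eq_sub_iff_add_eq_add.mp (hM.1 a b j l hab h)
    · rfl
    · exact (sub_eq_sub_iff_add_eq_add.mp (hM.1 b a j l hab h)).symm
  rcases lt_trichotomy j l with h | rfl | h
  · exact key a b j l h
  · rw [hM.2 a b j]
  · have h2 := key a b l j h
    rw [add_comm, add_comm (M b j * M a l)]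
    exact h2

lemma eq_zero_of_eq_neg [Algebra ℚ R] (x : R) (h : x = -x) : x = 0 := by
  have h2 : x + x = 0 := add_eq_zero_iff_eq_neg.mpr h
  have h3 : (2 : ℚ) • x = 0 := by rw [two_smul]; exact h2
  calc x = (2 : ℚ)⁻¹ • ((2 : ℚ) • x) := by
          rw [smul_smul, inv_mul_cancel₀ two_ne_zero, one_smul]
    _ = 0 := by rw [h3, smul_zero]

/-- "column determinant with column order c". -/
def Dfun {n : ℕ} (M : Matrix (Fin n) (Fin n) R) (c : Fin n → Fin n) : R :=
  ∑ σ : Equiv.Perm (Fin n),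
    (Equiv.Perm.sign σ : ℤ) • (List.ofFn fun k => M (σ k) (c k)).prod

lemma D_swap [Algebra ℚ R] {m : ℕ} (M : Matrix (Fin (m + 1)) (Fin (m + 1)) R)
    (hM : IsManin M) (c : Fin (m + 1) → Fin (m + 1)) (i : Fin m) :
    Dfun M (c ∘ (Equiv.swap i.castSucc i.succ)) = - Dfun M c := by
  set s := Equiv.swap i.castSucc i.succ with hs
  have hne : i.castSucc ≠ i.succ := (Fin.castSucc_lt_succ (i := i)).ne
  have key : ∀ σ : Equiv.Perm (Fin (m + 1)),
      (Equiv.Perm.sign (σ * s) : ℤ) •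
        ((List.ofFn fun k => M ((σ * s) k) ((c ∘ ⇑s) k)).prod
          + (List.ofFn fun k => M ((σ * s) k) (c k)).prod)
      = - ((Equiv.Perm.sign σ : ℤ) •
        ((List.ofFn fun k => M (σ k) ((c ∘ ⇑s) k)).prod
          + (List.ofFn fun k => M (σ k) (c k)).prod)) := by
    intro σ
    have hsgn : (Equiv.Perm.sign (σ * s) : ℤ) = - (Equiv.Perm.sign σ : ℤ) := by
      rw [Equiv.Perm.sign_mul, hs, Equiv.Perm.sign_swap hne]; simp
    have hfix : ∀ k : Fin (m + 1), (k : ℕ) < (i : ℕ) ∨ (i : ℕ) + 2 ≤ (k : ℕ) → s k = k := by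
      intro k hk
      apply Equiv.swap_apply_of_ne_of_ne <;>
        · intro he
          rw [he] at hk
          simp only [Fin.coe_castSucc, Fin.val_succ] at hk
          omega
    have hprod : (List.ofFn fun k => M ((σ * s) k) ((c ∘ ⇑s) k)).prod
          + (List.ofFn fun k => M ((σ * s) k) (c k)).prod
        = (List.ofFn fun k => M (σ k) ((c ∘ ⇑s) k)).prod
          + (List.ofFn fun k => M (σ k) (c k)).prod := by
      rw [prod_split (fun k => M ((σ * s) k) ((c ∘ ⇑s) k)) i,
          prod_split (fun k => M ((σ * s) k) (c k)) i,
          prod_split (fun k => M (σ k) ((c ∘ ⇑s) k)) i,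
          prod_split (fun k => M (σ k) (c k)) i]
      have hT : ∀ F : Fin (m + 1) → R, (∀ k, s k = k → F k = M (σ k) (c k)) →
          (List.ofFn F).take (i : ℕ) = (List.ofFn fun k => M (σ k) (c k)).take (i : ℕ) := by
        intro F hF
        exact take_ofFn_congr fun k hk => hF k (hfix k (Or.inl hk))
      have hD : ∀ F : Fin (m + 1) → R, (∀ k, s k = k → F k = M (σ k) (c k)) →
          (List.ofFn F).drop ((i : ℕ) + 2) =
            (List.ofFn fun k => M (σ k) (c k)).drop ((i : ℕ) + 2) := by
        intro F hF
        exact drop_ofFn_congr fun k hk => hF k (hfix k (Or.inr hk))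
      have e1 : ∀ k, s k = k → M ((σ * s) k) ((c ∘ ⇑s) k) = M (σ k) (c k) := by
        intro k hk; simp [Equiv.Perm.mul_apply, hk]
      have e2 : ∀ k, s k = k → M ((σ * s) k) (c k) = M (σ k) (c k) := by
        intro k hk; simp [Equiv.Perm.mul_apply, hk]
      have e3 : ∀ k, s k = k → M (σ k) ((c ∘ ⇑s) k) = M (σ k) (c k) := by
        intro k hk; simp [hk]
      rw [hT _ e1, hT _ e2, hT _ e3, hD _ e1, hD _ e2, hD _ e3]
      set T := (List.ofFn fun k => M (σ k) (c k)).take (i : ℕ)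
      set Dr := (List.ofFn fun k => M (σ k) (c k)).drop ((i : ℕ) + 2)
      have hcomb : ∀ p q : R, T.prod * p * Dr.prod + T.prod * q * Dr.prod
          = T.prod * (p + q) * Dr.prod := by
        intro p q; rw [mul_add, add_mul]
      rw [hcomb, hcomb]
      have hscs : s i.castSucc = i.succ := Equiv.swap_apply_left _ _
      have hssu : s i.succ = i.castSucc := Equiv.swap_apply_right _ _
      congr 2
      simp only [Equiv.Perm.mul_apply, Function.comp_apply, hscs, hssu]
      exact manin_rel hM (σ i.succ) (σ i.castSucc) (c i.succ) (c i.castSucc)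
    rw [hsgn, hprod, neg_smul]
  have hsum : Dfun M (c ∘ ⇑s) + Dfun M c = - (Dfun M (c ∘ ⇑s) + Dfun M c) := by
    unfold Dfun
    rw [← Finset.sum_add_distrib]
    simp_rw [← smul_add]
    nth_rewrite 1 [← Equiv.sum_comp (Equiv.mulRight s)
      (fun σ => (Equiv.Perm.sign σ : ℤ) •
        ((List.ofFn fun k => M (σ k) ((c ∘ ⇑s) k)).prod
          + (List.ofFn fun k => M (σ k) (c k)).prod))]
    rw [← Finset.sum_neg_distrib]
    exact Finset.sum_congr rfl fun σ _ => key σ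
  have hz : Dfun M (c ∘ ⇑s) + Dfun M c = 0 := eq_zero_of_eq_neg _ hsum
  exact eq_neg_of_add_eq_zero_left hz

lemma D_perm [Algebra ℚ R] {n : ℕ} (M : Matrix (Fin n) (Fin n) R) (hM : IsManin M)
    (τ : Equiv.Perm (Fin n)) (c : Fin n → Fin n) :
    Dfun M (c ∘ ⇑τ) = (Equiv.Perm.sign τ : ℤ) • Dfun M c := by
  cases n with
  | zero =>
    have hτ : τ = 1 := Subsingleton.elim τ 1
    subst hτ
    simp [Equiv.Perm.one_def]
  | succ m =>
    have hτ : τ ∈ Submonoid.closure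
        (Set.range fun i : Fin m => Equiv.swap i.castSucc i.succ) := by
      rw [Equiv.Perm.mclosure_swap_castSucc_succ m]; trivial
    induction hτ using Submonoid.closure_induction generalizing c with
    | mem x hx =>
      obtain ⟨i, rfl⟩ := hx
      rw [D_swap M hM c i, Equiv.Perm.sign_swap (Fin.castSucc_lt_succ (i := i)).ne]
      simp
    | one => simp [Equiv.Perm.one_def]
    | mul x y hx hy ihx ihy =>
      have hcomp : c ∘ ⇑(x * y) = (c ∘ ⇑x) ∘ ⇑y := by
        funext k; simp [Equiv.Perm.mul_apply]
      rw [hcomp, ihy, ihx, Equiv.Perm.sign_mul, smul_smul]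
      congr 1
      push_cast
      ring

lemma legProd_take {n : ℕ} (M : Matrix (Fin n) (Fin n) R) (m : ℕ)
    (f : Fin m → Fin n) : ∀ (j : ℕ), j ≤ m → ∀ (g : Fin m → Fin n),
    (((List.ofFn fun k : Fin m => leg M k).take j).prod) f g =
      if ∀ l : Fin m, j ≤ (l : ℕ) → f l = g l then
        ((List.ofFn fun k : Fin m => M (f k) (g k)).take j).prod else 0 := by
  intro j
  induction j with
  | zero =>
    intro _ g
    simp only [List.take_zero, List.prod_nil]
    rw [Matrix.one_apply]
    by_cases hfg : f = g
    · subst hfg; rw [if_pos rfl, if_pos (fun l _ => rfl)]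
    · rw [if_neg hfg, if_neg]
      intro hl; exact hfg (funext fun l => hl l (Nat.zero_le _))
  | succ j ih =>
    intro hj g
    have hjm : j < m := hj
    have hlen : j < (List.ofFn fun k : Fin m => leg M k).length := by simpa using hjm
    rw [List.prod_take_succ _ j hlen, Matrix.mul_apply]
    set jf : Fin m := ⟨j, hjm⟩ with hjf
    set h0 : Fin m → Fin n := Function.update g jf (f jf) with hh0
    rw [Finset.sum_eq_single h0]
    · have hleg : (List.ofFn fun k : Fin m => leg M k)[j] = leg M jf := by
        simp [List.getElem_ofFn, hjf]
      rw [hleg, ih (le_of_lt hjm) h0]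
      have hlegval : leg M jf h0 g = M (f jf) (g jf) := by
        unfold leg
        rw [if_pos]
        · simp [hh0]
        · intro l hl; simp [hh0, Function.update_apply, hl]
      rw [hlegval]
      have hcond : (∀ l : Fin m, j ≤ (l : ℕ) → f l = h0 l) ↔
          (∀ l : Fin m, j + 1 ≤ (l : ℕ) → f l = g l) := by
        constructor
        · intro hc l hl
          have hne : l ≠ jf := by
            intro he; rw [he] at hl; simp [hjf] at hl
          have := hc l (by omega)
          rwa [hh0, Function.update_apply, if_neg hne] at this
        · intro hc l hl
          rcases eq_or_ne l jf with rfl | hne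
          · simp [hh0]
          · rw [hh0, Function.update_apply, if_neg hne]
            apply hc
            have : (l : ℕ) ≠ j := by
              intro he; apply hne; apply Fin.ext; simp [hjf, he]
            omega
      by_cases hc : ∀ l : Fin m, j + 1 ≤ (l : ℕ) → f l = g l
      · rw [if_pos (hcond.mpr hc), if_pos hc]
        have htake : (List.ofFn fun k : Fin m => M (f k) (h0 k)).take j =
            (List.ofFn fun k : Fin m => M (f k) (g k)).take j := by
          apply take_ofFn_congr
          intro k hk
          have hne : k ≠ jf := by
            intro he; rw [he] at hk; simp [hjf] at hk
          rw [hh0, Function.update_apply, if_neg hne]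
        rw [htake, List.prod_take_succ _ j (by simpa using hjm)]
        congr 1
        simp [List.getElem_ofFn, hjf]
      · rw [if_neg (fun hcc => hc (hcond.mp hcc)), if_neg hc, zero_mul]
    · intro h _ hne
      by_cases hc1 : ∀ l : Fin m, j ≤ (l : ℕ) → f l = h l
      · by_cases hc2 : ∀ l, l ≠ jf → h l = g l
        · exfalso
          apply hne
          funext l
          rcases eq_or_ne l jf with he | hl
          · rw [he, hh0, Function.update_self]
            exact (hc1 jf le_rfl).symm
          · rw [hh0, Function.update_apply, if_neg hl]
            exact hc2 l hl
        · have hzero : leg M jf h g = 0 := by unfold leg; rw [if_neg hc2]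
          have hleg : (List.ofFn fun k : Fin m => leg M k)[j] = leg M jf := by
            simp [List.getElem_ofFn, hjf]
          rw [hleg, hzero, mul_zero]
      · rw [ih (le_of_lt hjm) h, if_neg hc1, zero_mul]
    · intro hmem; exact absurd (Finset.mem_univ h0) hmem

lemma legProd_apply {n : ℕ} (M : Matrix (Fin n) (Fin n) R) (m : ℕ)
    (f g : Fin m → Fin n) :
    legProd M m f g = (List.ofFn fun k : Fin m => M (f k) (g k)).prod := by
  have := legProd_take M m f m le_rfl g
  rw [List.take_of_length_le (by simp), List.take_of_length_le (by simp)] at this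
  rw [legProd, this, if_pos]
  intro l hl
  exact absurd hl (by simp [Nat.not_le.mpr l.isLt])

lemma trace_permMat_mul {n : ℕ} (M : Matrix (Fin n) (Fin n) R) (σ : Equiv.Perm (Fin n)) :
    Matrix.trace (permMat R n σ * legProd M n) =
      ∑ f : Fin n → Fin n, (List.ofFn fun k => M (f (σ k)) (f k)).prod := by
  rw [Matrix.trace]
  apply Finset.sum_congr rfl
  intro f _
  rw [Matrix.diag_apply, Matrix.mul_apply]
  rw [Finset.sum_eq_single (f ∘ ⇑σ)]
  · have hcond : f = (f ∘ ⇑σ) ∘ ⇑σ⁻¹ := by funext k; simp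
    simp only [permMat]
    rw [if_pos hcond, one_mul, legProd_apply]
    rfl
  · intro g _ hg
    have hc : ¬ (f = g ∘ ⇑σ⁻¹) := by
      intro h; apply hg; funext k; rw [h]; simp
    simp only [permMat]
    rw [if_neg hc, zero_mul]
  · intro h; exact absurd (Finset.mem_univ _) h

variable [Algebra ℚ R] {n : ℕ} (M : Matrix (Fin n) (Fin n) R)

lemma S_noninj (f : Fin n → Fin n) (hf : ¬ Function.Injective f) :
    ∑ σ : Equiv.Perm (Fin n),
      (Equiv.Perm.sign σ : ℤ) • (List.ofFn fun k => M (f (σ k)) (f k)).prod = 0 := by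
  obtain ⟨a, b, hfab, hab⟩ := Function.not_injective_iff.mp hf
  set t := Equiv.swap a b with ht
  have hft : ∀ x, f (t x) = f x := by
    intro x
    rcases eq_or_ne x a with rfl | hxa
    · rw [ht, Equiv.swap_apply_left]; exact hfab.symm
    rcases eq_or_ne x b with rfl | hxb
    · rw [ht, Equiv.swap_apply_right]; exact hfab
    · rw [ht, Equiv.swap_apply_of_ne_of_ne hxa hxb]
  apply eq_zero_of_eq_neg
  set G := fun σ : Equiv.Perm (Fin n) =>
    (Equiv.Perm.sign σ : ℤ) • (List.ofFn fun k => M (f (σ k)) (f k)).prod with hG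
  calc ∑ σ, G σ = ∑ σ, G (t * σ) := (Equiv.sum_comp (Equiv.mulLeft t) G).symm
    _ = ∑ σ, - G σ := by
        apply Finset.sum_congr rfl
        intro σ _
        rw [hG]
        simp only
        have h1 : (Equiv.Perm.sign (t * σ) : ℤ) = - (Equiv.Perm.sign σ : ℤ) := by
          rw [Equiv.Perm.sign_mul, ht, Equiv.Perm.sign_swap hab]; simp
        have h2 : (List.ofFn fun k => M (f ((t * σ) k)) (f k)) =
            (List.ofFn fun k => M (f (σ k)) (f k)) := by
          congr 1; funext k; rw [Equiv.Perm.mul_apply, hft]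
        rw [h1, h2, neg_smul]
    _ = - ∑ σ, G σ := by rw [Finset.sum_neg_distrib]

lemma S_perm (hM : IsManin M) (τ : Equiv.Perm (Fin n)) :
    ∑ σ : Equiv.Perm (Fin n),
      (Equiv.Perm.sign σ : ℤ) • (List.ofFn fun k => M (τ (σ k)) (τ k)).prod = cdet M := by
  set G := fun σ : Equiv.Perm (Fin n) =>
    (Equiv.Perm.sign σ : ℤ) • (List.ofFn fun k => M (τ (σ k)) (τ k)).prod with hG
  have hDid : Dfun M id = cdet M := rfl
  have step : ∑ σ, G σ = (Equiv.Perm.sign τ : ℤ) • Dfun M ⇑τ := by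
    calc ∑ σ, G σ = ∑ σ, G (τ⁻¹ * σ) := (Equiv.sum_comp (Equiv.mulLeft τ⁻¹) G).symm
      _ = ∑ σ, (Equiv.Perm.sign τ : ℤ) •
            ((Equiv.Perm.sign σ : ℤ) • (List.ofFn fun k => M (σ k) (τ k)).prod) := by
          apply Finset.sum_congr rfl
          intro σ _
          rw [hG]
          simp only
          have h1 : (Equiv.Perm.sign (τ⁻¹ * σ) : ℤ) =
              (Equiv.Perm.sign τ : ℤ) * (Equiv.Perm.sign σ : ℤ) := by
            rw [Equiv.Perm.sign_mul, Equiv.Perm.sign_inv]; push_cast; ring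
          have h2 : (List.ofFn fun k => M (τ ((τ⁻¹ * σ) k)) (τ k)) =
              (List.ofFn fun k => M (σ k) (τ k)) := by
            congr 1; funext k; rw [Equiv.Perm.mul_apply, Equiv.Perm.inv_def, Equiv.apply_symm_apply]
          rw [h1, h2, mul_smul]
      _ = (Equiv.Perm.sign τ : ℤ) • Dfun M ⇑τ := by
          rw [← Finset.smul_sum]; rfl
  have hDτ : Dfun M ⇑τ = (Equiv.Perm.sign τ : ℤ) • Dfun M id := by
    rw [← D_perm M hM τ id, Function.id_comp]
  rw [step, hDτ, hDid, smul_smul]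
  have : (Equiv.Perm.sign τ : ℤ) * (Equiv.Perm.sign τ : ℤ) = 1 := by
    rw [← Units.val_mul, Int.units_mul_self, Units.val_one]
  rw [this, one_smul]

end Aux

/-- for a Manin matrix M,
det_col M = tr(A_n · M⁽¹⁾M⁽²⁾⋯M⁽ⁿ⁾) where the trace is over all n tensor factors. -/
theorem cdet_eq_trace_antisym {R : Type*} [Ring R] [Algebra ℚ R] {n : ℕ}
    (M : Matrix (Fin n) (Fin n) R) (hM : IsManin M) :
    cdet M = Matrix.trace (antisym R n n * legProd M n) := by
  have main : Matrix.trace (antisym R n n * legProd M n) = cdet M := by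
    rw [antisym, smul_mul_assoc, Matrix.trace_smul, Finset.sum_mul]
    simp_rw [smul_mul_assoc]
    rw [Matrix.trace_sum]
    simp_rw [Matrix.trace_smul, trace_permMat_mul M, Int.cast_smul_eq_zsmul ℚ,
      Finset.smul_sum]
    rw [Finset.sum_comm]
    have hS : ∀ f : Fin n → Fin n,
        ∑ σ : Equiv.Perm (Fin n),
          (Equiv.Perm.sign σ : ℤ) • (List.ofFn fun k => M (f (σ k)) (f k)).prod =
        if Function.Bijective f then cdet M else 0 := by
      intro f
      by_cases hf : Function.Bijective f
      · rw [if_pos hf]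
        have : f = ⇑(Equiv.ofBijective f hf) := rfl
        rw [this] at *
        exact S_perm M hM (Equiv.ofBijective f hf)
      · rw [if_neg hf]
        apply S_noninj
        intro hinj
        exact hf (Finite.injective_iff_bijective.mp hinj)
    simp_rw [← Finset.smul_sum]
    simp_rw [hS]
    rw [← Finset.sum_filter]
    have hcount : ∑ f ∈ Finset.univ.filter (fun f : Fin n → Fin n => Function.Bijective f),
        cdet M = ∑ _τ : Equiv.Perm (Fin n), cdet M := by
      symm
      apply Finset.sum_bij (fun (τ : Equiv.Perm (Fin n)) _ => ⇑τ)
      · intro τ _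
        exact Finset.mem_filter.mpr ⟨Finset.mem_univ _, τ.bijective⟩
      · intro τ1 _ τ2 _ h
        exact Equiv.coe_fn_injective h
      · intro f hf
        exact ⟨Equiv.ofBijective f (Finset.mem_filter.mp hf).2, Finset.mem_univ _, rfl⟩
      · intro τ _
        rfl
    rw [hcount, Finset.sum_const, Finset.card_univ, Fintype.card_perm, Fintype.card_fin,
      ← Nat.cast_smul_eq_nsmul ℚ, smul_smul,
      inv_mul_cancel₀ (Nat.cast_ne_zero.mpr (Nat.factorial_ne_zero n)), one_smul]
  rw [main]
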